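/- For distinct x, y ∈ (π/4, π/2), the logarithmic mean satisfies L(tan x, tan y) ≥ tan(L(x, y)). -/

import Mathlib

noncomputable def logMean (a b : ℝ) : ℝ := (a - b) / (Real.log a - Real.log b)

open Real

section helpers
open MeasureTheory Set

lemma exp_integral_aux (p q : ℝ) (h : p ≠ q) :
    ∫ t in (0:ℝ)..1, Real.exp (t * p + (1 - t) * q) = (Real.exp p - Real.exp q) / (p - q) := by
  have hc : p - q ≠ 0 := sub_ne_zero.2 h
  have h1 : ∀ t : ℝ, Real.exp (t * p + (1 - t) * q) = Real.exp q * Real.exp (t * (p - q)) := by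
    intro t; rw [← Real.exp_add]; ring_nf
  simp_rw [h1]
  rw [intervalIntegral.integral_const_mul,
    intervalIntegral.integral_comp_mul_right Real.exp hc, integral_exp, smul_eq_mul,
    one_mul, zero_mul, Real.exp_zero]
  have h2 : rexp q * rexp (p - q) = rexp p := by rw [← Real.exp_add]; ring_nf
  field_simp
  nlinarith [h2]


lemma phi_mono : StrictMonoOn (fun v : ℝ => v / (Real.sin v * Real.cos v)) (Ico (π/4) (π/2)) := by
  have hpi := Real.pi_pos
  apply strictMonoOn_of_deriv_pos (convex_Ico _ _)
  · apply ContinuousOn.div continuousOn_id (by fun_prop)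
    intro v hv
    simp only [mem_Ico] at hv
    have hs : 0 < Real.sin v := Real.sin_pos_of_pos_of_lt_pi (by linarith) (by linarith)
    have hcv : 0 < Real.cos v := Real.cos_pos_of_mem_Ioo ⟨by linarith, hv.2⟩
    positivity
  · intro v hv
    rw [interior_Ico] at hv
    obtain ⟨hv1, hv2⟩ := hv
    have hs : 0 < Real.sin v := Real.sin_pos_of_pos_of_lt_pi (by linarith) (by linarith)
    have hcv : 0 < Real.cos v := Real.cos_pos_of_mem_Ioo ⟨by linarith, hv2⟩
    have hd : HasDerivAt (fun v : ℝ => v / (Real.sin v * Real.cos v))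
        ((1 * (Real.sin v * Real.cos v) - v * (Real.cos v * Real.cos v + Real.sin v * (-Real.sin v)))
          / (Real.sin v * Real.cos v) ^ 2) v := by
      exact (hasDerivAt_id v).div ((Real.hasDerivAt_sin v).mul (Real.hasDerivAt_cos v))
        (by positivity)
    rw [hd.deriv]
    have hc2 : Real.cos (2 * v) < 0 :=
      Real.cos_neg_of_pi_div_two_lt_of_lt (by linarith) (by linarith)
    rw [Real.cos_two_mul'] at hc2
    have : Real.cos v * Real.cos v + Real.sin v * (-Real.sin v) < 0 := by nlinarith
    have hden : 0 < (Real.sin v * Real.cos v) ^ 2 := by positivity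
    apply div_pos _ hden
    nlinarith


lemma tan_convex {y x : ℝ} (h1 : π/4 < y) (h2 : x < π/2) :
    ConvexOn ℝ (Icc y x) Real.tan := by
  have hpi := Real.pi_pos
  have hcos : ∀ v ∈ Icc y x, 0 < Real.cos v := fun v hv =>
    Real.cos_pos_of_mem_Ioo ⟨by linarith [hv.1], by linarith [hv.2]⟩
  apply MonotoneOn.convexOn_of_deriv (convex_Icc _ _)
  · exact Real.continuousOn_tan.mono fun v hv => (hcos v hv).ne'
  · rw [interior_Icc]
    intro v hv
    exact (Real.differentiableAt_tan.2 (hcos v (Ioo_subset_Icc_self hv)).ne').differentiableWithinAt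
  · rw [interior_Icc]
    intro u hu v hv huv
    rw [Real.deriv_tan, Real.deriv_tan]
    have hcu := hcos u (Ioo_subset_Icc_self hu)
    have hcv := hcos v (Ioo_subset_Icc_self hv)
    have : Real.cos v ≤ Real.cos u := by
      apply Real.cos_le_cos_of_nonneg_of_le_pi (by linarith [hu.1]) (by linarith [hv.2]) huv
    gcongr

lemma g_convex {y x : ℝ} (h1 : π/4 < y) (h2 : x < π/2) (hyx : y ≤ x) :
    ConvexOn ℝ (Icc (Real.log y) (Real.log x)) (fun u => Real.log (Real.tan (Real.exp u))) := by
  have hpi := Real.pi_pos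
  have hy0 : 0 < y := by linarith
  have hmem : ∀ u ∈ Icc (Real.log y) (Real.log x),
      Real.exp u ∈ Icc y x := by
    intro u hu
    constructor
    · calc y = Real.exp (Real.log y) := (Real.exp_log hy0).symm
        _ ≤ _ := Real.exp_le_exp.2 hu.1
    · calc Real.exp u ≤ Real.exp (Real.log x) := Real.exp_le_exp.2 hu.2
        _ = x := Real.exp_log (by linarith)
  have hfacts : ∀ v ∈ Icc y x, 0 < Real.cos v ∧ 0 < Real.sin v ∧ 0 < Real.tan v := by
    intro v hv
    have hc : 0 < Real.cos v := Real.cos_pos_of_mem_Ioo ⟨by linarith [hv.1], by linarith [hv.2]⟩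
    have hs : 0 < Real.sin v := Real.sin_pos_of_pos_of_lt_pi (by linarith [hv.1]) (by linarith [hv.2])
    exact ⟨hc, hs, by rw [Real.tan_eq_sin_div_cos]; positivity⟩
  -- derivative computation
  have hd : ∀ u ∈ Ioo (Real.log y) (Real.log x),
      HasDerivAt (fun u => Real.log (Real.tan (Real.exp u)))
        (Real.exp u / (Real.sin (Real.exp u) * Real.cos (Real.exp u))) u := by
    intro u hu
    set e := Real.exp u with he
    obtain ⟨hc, hs, ht⟩ := hfacts e (hmem u (Ioo_subset_Icc_self hu))
    have d1 : HasDerivAt (fun u => Real.tan (Real.exp u)) (1 / Real.cos e ^ 2 * e) u :=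
      (Real.hasDerivAt_tan (x := Real.exp u) hc.ne').comp u (Real.hasDerivAt_exp u)
    have d2 := d1.log ht.ne'
    convert d2 using 1
    rw [← he]
    rw [Real.tan_eq_sin_div_cos]
    field_simp
  apply MonotoneOn.convexOn_of_deriv (convex_Icc _ _)
  · -- continuity
    intro u hu
    apply ContinuousAt.continuousWithinAt
    obtain ⟨hc, hs, ht⟩ := hfacts _ (hmem u hu)
    exact ((Real.continuousAt_tan.2 hc.ne').comp
      (Real.continuous_exp.continuousAt)).log ht.ne'
  · rw [interior_Icc]
    exact fun u hu => (hd u hu).differentiableAt.differentiableWithinAt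
  · rw [interior_Icc]
    intro u hu v hv huv
    rw [(hd u hu).deriv, (hd v hv).deriv]
    have key := phi_mono
    have hmu := hmem u (Ioo_subset_Icc_self hu)
    have hmv := hmem v (Ioo_subset_Icc_self hv)
    have e1 : Real.exp u ∈ Ico (π/4) (π/2) := ⟨by linarith [hmu.1], by linarith [hmu.2]⟩
    have e2 : Real.exp v ∈ Ico (π/4) (π/2) := ⟨by linarith [hmv.1], by linarith [hmv.2]⟩
    rcases eq_or_lt_of_le huv with rfl | hlt
    · exact le_rfl
    · exact (key e1 e2 (Real.exp_lt_exp.2 hlt)).le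


section aux
lemma key_main {x y : ℝ} (hx : x ∈ Set.Ioo (π / 4) (π / 2))
    (hy : y ∈ Set.Ioo (π / 4) (π / 2)) (hlt : y < x) :
    Real.tan (logMean x y) ≤ logMean (Real.tan x) (Real.tan y) := by
  have hpi := Real.pi_pos
  obtain ⟨hx1, hx2⟩ := hx
  obtain ⟨hy1, hy2⟩ := hy
  have hy0 : 0 < y := by linarith
  have hx0 : 0 < x := by linarith
  have hfacts : ∀ v ∈ Icc y x, 0 < Real.cos v ∧ 0 < Real.tan v := by
    intro v hv
    have hc : 0 < Real.cos v := Real.cos_pos_of_mem_Ioo ⟨by linarith [hv.1], by linarith [hv.2]⟩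
    have hs : 0 < Real.sin v := Real.sin_pos_of_pos_of_lt_pi (by linarith [hv.1]) (by linarith [hv.2])
    exact ⟨hc, by rw [Real.tan_eq_sin_div_cos]; positivity⟩
  have hty : 0 < Real.tan y := (hfacts y ⟨le_rfl, hlt.le⟩).2
  have htx : 0 < Real.tan x := (hfacts x ⟨hlt.le, le_rfl⟩).2
  have httlt : Real.tan y < Real.tan x :=
    Real.tan_lt_tan_of_lt_of_lt_pi_div_two (by linarith) hx2 hlt
  have hlog : Real.log y < Real.log x := Real.log_lt_log hy0 hlt
  have hlogt : Real.log (Real.tan y) < Real.log (Real.tan x) := Real.log_lt_log hty httlt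
  set m : ℝ → ℝ := fun t => Real.exp (t * Real.log x + (1 - t) * Real.log y) with hm
  set M : ℝ → ℝ := fun t => Real.exp (t * Real.log (Real.tan x) + (1 - t) * Real.log (Real.tan y)) with hM
  -- step A
  have stepA : ∫ t in (0:ℝ)..1, m t = logMean x y := by
    rw [hm]
    rw [exp_integral_aux _ _ hlog.ne', Real.exp_log hx0, Real.exp_log hy0]
    rfl
  have stepD : ∫ t in (0:ℝ)..1, M t = logMean (Real.tan x) (Real.tan y) := by
    rw [hM, exp_integral_aux _ _ hlogt.ne', Real.exp_log htx, Real.exp_log hty]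
    rfl
  -- membership
  have hmmem : ∀ t ∈ Icc (0:ℝ) 1, m t ∈ Icc y x := by
    intro t ht
    constructor
    · rw [← Real.exp_log hy0]
      apply Real.exp_le_exp.2
      nlinarith [ht.1, ht.2, hlog.le]
    · rw [← Real.exp_log hx0]
      apply Real.exp_le_exp.2
      nlinarith [ht.1, ht.2, hlog.le]
  have hmcont : Continuous m := by fun_prop
  have htancont : ContinuousOn (fun t => Real.tan (m t)) (Icc 0 1) := by
    intro t ht
    exact (ContinuousAt.continuousWithinAt
      (((Real.continuousAt_tan.2 (hfacts _ (hmmem t ht)).1.ne').comp hmcont.continuousAt)))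
  -- measure
  set μ : Measure ℝ := volume.restrict (Ioc (0:ℝ) 1) with hmu
  haveI : IsProbabilityMeasure μ := ⟨by simp [hmu, Real.volume_Ioc]⟩
  have hfi : Integrable m μ := hmcont.integrableOn_Ioc
  have hgi : Integrable (Real.tan ∘ m) μ :=
    ((htancont.integrableOn_Icc)).mono_set Ioc_subset_Icc_self
  have hfs : ∀ᵐ t ∂μ, m t ∈ Icc y x := by
    rw [hmu]
    filter_upwards [MeasureTheory.ae_restrict_mem measurableSet_Ioc] with t ht
    exact hmmem t ⟨ht.1.le, ht.2⟩
  -- Jensen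
  have hconv : ConvexOn ℝ (Icc y x) Real.tan := tan_convex hy1 hx2
  have hJ := hconv.map_average_le (Real.continuousOn_tan.mono fun v hv => (hfacts v hv).1.ne')
    isClosed_Icc hfs hfi hgi
  rw [average_eq_integral, average_eq_integral] at hJ
  have int_eq1 : ∫ t, m t ∂μ = ∫ t in (0:ℝ)..1, m t := by
    rw [intervalIntegral.integral_of_le zero_le_one]
  have int_eq2 : ∫ t, Real.tan (m t) ∂μ = ∫ t in (0:ℝ)..1, Real.tan (m t) := by
    rw [intervalIntegral.integral_of_le zero_le_one]
  rw [int_eq1, int_eq2, stepA] at hJ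
  -- pointwise: tan (m t) ≤ M t
  have hgconv := g_convex hy1 hx2 hlt.le
  have hpt : ∀ t ∈ Icc (0:ℝ) 1, Real.tan (m t) ≤ M t := by
    intro t ht
    have h2 := hgconv.2 ⟨hlog.le, le_rfl⟩ ⟨le_rfl, hlog.le⟩ ht.1
      (sub_nonneg.2 ht.2) (by ring : t + (1 - t) = 1)
    simp only [smul_eq_mul] at h2
    rw [Real.exp_log hx0, Real.exp_log hy0] at h2
    have htm : 0 < Real.tan (m t) := (hfacts _ (hmmem t ht)).2
    calc Real.tan (m t) = Real.exp (Real.log (Real.tan (m t))) := (Real.exp_log htm).symm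
      _ ≤ M t := Real.exp_le_exp.2 h2
  -- integral mono
  have hint_m : IntervalIntegrable (fun t => Real.tan (m t)) volume 0 1 := by
    rw [intervalIntegrable_iff_integrableOn_Ioc_of_le zero_le_one]
    exact hgi
  have hint_M : IntervalIntegrable M volume 0 1 := (by fun_prop : Continuous M).intervalIntegrable 0 1
  have stepC : ∫ t in (0:ℝ)..1, Real.tan (m t) ≤ ∫ t in (0:ℝ)..1, M t :=
    intervalIntegral.integral_mono_on zero_le_one hint_m hint_M hpt
  calc Real.tan (logMean x y) ≤ ∫ t in (0:ℝ)..1, Real.tan (m t) := hJ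
    _ ≤ ∫ t in (0:ℝ)..1, M t := stepC
    _ = logMean (Real.tan x) (Real.tan y) := stepD
end aux


lemma logMean_comm (a b : ℝ) : logMean a b = logMean b a := by
  unfold logMean
  rw [← neg_div_neg_eq]
  ring_nf

end helpers

theorem stmt13 (x y : ℝ) (hx : x ∈ Set.Ioo (π / 4) (π / 2))
    (hy : y ∈ Set.Ioo (π / 4) (π / 2)) (hxy : x ≠ y) :
    logMean (Real.tan x) (Real.tan y) ≥ Real.tan (logMean x y) := by
  rcases lt_or_gt_of_ne hxy with h | h
  · rw [logMean_comm (Real.tan x) (Real.tan y), logMean_comm x y]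
    exact key_main hy hx h
  · exact key_main hx hy h
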